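/- Consider the graph G_{k,l} formed by a cycle on k vertices connected (by identifying or attaching the cycle vertex v₀ to a clique vertex via an edge) to a complete graph K_l on l vertices. Then the second-smallest eigenvalue of the normalized Laplacian of G_{k,l} satisfies λ₂(G_{k,l}) ≤ 1 − cos(2π/k) = O(1/k²). -/

import Mathlib

open Matrix

/-- Weighted degree of a vertex. -/
noncomputable def wdeg {V : Type*} [Fintype V] (A : Matrix V V ℝ) (u : V) : ℝ :=
  ∑ v, A u v

/-- The normalized Laplacian `I - D^{-1/2} A D^{-1/2}`. -/
noncomputable def normLap {V : Type*} [Fintype V] [DecidableEq V]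
    (A : Matrix V V ℝ) : Matrix V V ℝ :=
  1 - Matrix.diagonal (fun u => 1 / Real.sqrt (wdeg A u)) * A *
    Matrix.diagonal (fun u => 1 / Real.sqrt (wdeg A u))

/-- Adjacency matrix of the graph `G_{k,l}`: a cycle `C_k` whose vertex `0` is
joined by an edge to vertex `0` of a clique `K_l`. -/
def cycleCliqueAdj (k l : ℕ) (hk : 3 ≤ k) (hl : 1 ≤ l) :
    Matrix (Fin k ⊕ Fin l) (Fin k ⊕ Fin l) ℝ :=
  fun u v =>
    match u, v with
    | Sum.inl i, Sum.inl j => if j = i + ⟨1, by omega⟩ ∨ i = j + ⟨1, by omega⟩ then 1 else 0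
    | Sum.inl i, Sum.inr j => if i = ⟨0, by omega⟩ ∧ j = ⟨0, by omega⟩ then 1 else 0
    | Sum.inr i, Sum.inl j => if j = ⟨0, by omega⟩ ∧ i = ⟨0, by omega⟩ then 1 else 0
    | Sum.inr i, Sum.inr j => if i ≠ j then 1 else 0

open Real

section TrigAux

lemma sinper (k : ℕ) (hk : 0 < k) (m n : ℤ) (h : m % k = n % k) :
    Real.sin (2*π*m/k) = Real.sin (2*π*n/k) := by
  obtain ⟨t, ht⟩ : (k:ℤ) ∣ n - m := Int.ModEq.dvd h
  have hm : m = n - k * t := by omega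
  have hkr : (k:ℝ) ≠ 0 := by positivity
  have h2 : 2*π*m/k = 2*π*n/k + (-t : ℤ) * (2*π) := by
    rw [hm]; push_cast; field_simp; ring
  rw [h2, Real.sin_add_int_mul_two_pi]

lemma sinsum (k : ℕ) (hk : 0 < k) : ∑ i : Fin k, Real.sin (2*π*i/k) = 0 := by
  haveI : NeZero k := ⟨by omega⟩
  have key : ∀ i : Fin k, Real.sin (2*π*((-i : Fin k) : ℕ)/k) = - Real.sin (2*π*i/k) := by
    intro i
    have h1 : (((-i : Fin k) : ℕ) : ℤ) % k = (-(i:ℕ) : ℤ) % k := by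
      have hv : ((-i : Fin k) : ℕ) = (k - i) % k := by rw [Fin.neg_def]
      have hik : (i:ℕ) ≤ k := le_of_lt i.2
      rw [hv]
      push_cast [Nat.cast_sub hik]
      rw [Int.emod_emod_of_dvd _ dvd_rfl,
        show (k:ℤ) - i = -(i:ℕ) + k*1 by ring, Int.add_mul_emod_self_left]
    have h2 := sinper k hk (((-i : Fin k) : ℕ) : ℤ) (-(i:ℕ)) h1
    push_cast at h2
    rw [h2, show 2*π*(-(i:ℕ):ℝ)/k = -(2*π*(i:ℕ)/k) by ring, Real.sin_neg]
  have h2 : ∑ i : Fin k, Real.sin (2*π*i/k) = ∑ i : Fin k, Real.sin (2*π*((-i : Fin k):ℕ)/k) :=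
    (Fintype.sum_equiv (Equiv.neg (Fin k)) _ _ (fun i => rfl)).symm
  have h3 : ∑ i : Fin k, Real.sin (2*π*((-i : Fin k):ℕ)/k) = - ∑ i : Fin k, Real.sin (2*π*i/k) := by
    rw [← Finset.sum_neg_distrib]
    exact Finset.sum_congr rfl fun i _ => key i
  linarith [h2, h3]

lemma sin_next (k : ℕ) (hk : 3 ≤ k) (i : Fin k) :
    Real.sin (2*π*((i + ⟨1, by omega⟩ : Fin k):ℕ)/k) = Real.sin (2*π*((i:ℕ)+1)/k) := by
  have hk0 : 0 < k := by omega
  have h := sinper k hk0 (((i + ⟨1, by omega⟩ : Fin k):ℕ) : ℤ) ((i:ℕ)+1) ?_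
  · push_cast at h ⊢; convert h using 3
  · have hv : ((i + ⟨1, by omega⟩ : Fin k):ℕ) = ((i:ℕ) + 1) % k := by
      rw [Fin.add_def]
    rw [hv]; push_cast
    rw [Int.emod_emod_of_dvd _ dvd_rfl]

lemma sin_prev (k : ℕ) (hk : 3 ≤ k) (i : Fin k) :
    Real.sin (2*π*((i - ⟨1, by omega⟩ : Fin k):ℕ)/k) = Real.sin (2*π*((i:ℕ)-1)/k) := by
  have hk0 : 0 < k := by omega
  have h := sinper k hk0 (((i - ⟨1, by omega⟩ : Fin k):ℕ) : ℤ) ((i:ℕ)-1) ?_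
  · push_cast at h ⊢
    rw [h]
  · have hv : ((i - ⟨1, by omega⟩ : Fin k):ℕ) = (k - 1 + (i:ℕ)) % k := by
      rw [Fin.sub_def]
    rw [hv]
    have h2 : ((k:ℤ) - 1 + (i:ℕ)) % k = ((i:ℕ) - 1) % k := by
      rw [show ((k:ℤ) - 1 + (i:ℕ)) = (i:ℕ) - 1 + k*1 by ring, Int.add_mul_emod_self_left]
    push_cast [Nat.cast_sub (by omega : 1 ≤ k)]
    rw [Int.emod_emod_of_dvd _ dvd_rfl, h2]

lemma recur (k : ℕ) (hk : 3 ≤ k) (i : Fin k) :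
    Real.sin (2*π*((i + ⟨1, by omega⟩ : Fin k):ℕ)/k)
      + Real.sin (2*π*((i - ⟨1, by omega⟩ : Fin k):ℕ)/k)
      = 2 * Real.cos (2*π/k) * Real.sin (2*π*(i:ℕ)/k) := by
  rw [sin_next k hk i, sin_prev k hk i]
  have hkr : (k:ℝ) ≠ 0 := by positivity
  rw [show 2*π*((i:ℕ)+1)/k = 2*π*(i:ℕ)/k + 2*π/k by field_simp,
      show 2*π*((i:ℕ)-1)/k = 2*π*(i:ℕ)/k - 2*π/k by field_simp,
      Real.sin_add, Real.sin_sub]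
  ring

end TrigAux

lemma two_ne {k : ℕ} (hk : 3 ≤ k) (i : Fin k) :
    i + (⟨1, by omega⟩ : Fin k) ≠ i - ⟨1, by omega⟩ := by
  haveI : NeZero k := ⟨by omega⟩
  intro h
  set e : Fin k := ⟨1, by omega⟩ with he
  rw [sub_eq_add_neg] at h
  have h3 : e = -e := add_left_cancel h
  rw [eq_neg_iff_add_eq_zero] at h3
  have h4 := congrArg Fin.val h3
  rw [Fin.add_def] at h4
  simp only [he, Fin.val_zero] at h4
  rw [Nat.mod_eq_of_lt (by omega)] at h4
  omega

section DegAux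

variable (k l : ℕ) (hk : 3 ≤ k) (hl : 1 ≤ l)

lemma wdeg_inl (i : Fin k) :
    wdeg (cycleCliqueAdj k l hk hl) (Sum.inl i)
      = 2 + (if i = ⟨0, by omega⟩ then 1 else 0) := by
  haveI : NeZero k := ⟨by omega⟩
  rw [wdeg, Fintype.sum_sum_type]
  have h1 : ∑ j : Fin k, cycleCliqueAdj k l hk hl (Sum.inl i) (Sum.inl j) = 2 := by
    have hcond : ∀ j : Fin k, cycleCliqueAdj k l hk hl (Sum.inl i) (Sum.inl j)
        = (if j = i + ⟨1, by omega⟩ then (1:ℝ) else 0)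
          + (if j = i - ⟨1, by omega⟩ then (1:ℝ) else 0) := by
      intro j
      show (if (j = i + ⟨1, by omega⟩ ∨ i = j + ⟨1, by omega⟩) then (1:ℝ) else 0) = _
      have hiff : (j = i + ⟨1, by omega⟩ ∨ i = j + ⟨1, by omega⟩)
          ↔ (j = i + ⟨1, by omega⟩ ∨ j = i - ⟨1, by omega⟩) := by
        apply or_congr Iff.rfl
        constructor
        · intro h; rw [h, add_sub_cancel_right]
        · intro h; rw [h, sub_add_cancel]
      rw [if_congr hiff rfl rfl]
      have hab := two_ne hk i
      by_cases h1 : j = i + ⟨1, by omega⟩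
      · have h2 : ¬ j = i - ⟨1, by omega⟩ := by rw [h1]; exact hab
        simp [h1, h2, hab]
      · by_cases h3 : j = i - ⟨1, by omega⟩
        · simp [h1, h3, Ne.symm hab]
        · simp [h1, h3]
    rw [Finset.sum_congr rfl fun j _ => hcond j, Finset.sum_add_distrib]
    rw [Finset.sum_ite_eq' Finset.univ (i + ⟨1, by omega⟩) (fun _ => (1:ℝ)),
      Finset.sum_ite_eq' Finset.univ (i - ⟨1, by omega⟩) (fun _ => (1:ℝ))]
    simp
    norm_num
  have h2 : ∑ j : Fin l, cycleCliqueAdj k l hk hl (Sum.inl i) (Sum.inr j)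
      = (if i = ⟨0, by omega⟩ then (1:ℝ) else 0) := by
    show ∑ j : Fin l, (if (i = ⟨0, by omega⟩ ∧ j = ⟨0, by omega⟩) then (1:ℝ) else 0) = _
    by_cases hi : i = ⟨0, by omega⟩
    · simp [hi, Finset.sum_ite_eq']
    · have hi' : i ≠ 0 := by rintro rfl; exact hi (Fin.ext (by simp))
      simp [hi']
  rw [h1, h2]

lemma wdeg_inr (j : Fin l) :
    wdeg (cycleCliqueAdj k l hk hl) (Sum.inr j)
      = (if j = ⟨0, by omega⟩ then 1 else 0) + ((l:ℝ) - 1) := by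
  rw [wdeg, Fintype.sum_sum_type]
  have h1 : ∑ i : Fin k, cycleCliqueAdj k l hk hl (Sum.inr j) (Sum.inl i)
      = (if j = ⟨0, by omega⟩ then (1:ℝ) else 0) := by
    show ∑ i : Fin k, (if (i = ⟨0, by omega⟩ ∧ j = ⟨0, by omega⟩) then (1:ℝ) else 0) = _
    by_cases hj : j = ⟨0, by omega⟩
    · simp [hj, Finset.sum_ite_eq']
    · simp [hj]
  have h2 : ∑ j' : Fin l, cycleCliqueAdj k l hk hl (Sum.inr j) (Sum.inr j') = (l:ℝ) - 1 := by
    have : ∀ j' : Fin l, cycleCliqueAdj k l hk hl (Sum.inr j) (Sum.inr j')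
        = 1 - (if j' = j then (1:ℝ) else 0) := by
      intro j'
      show (if j ≠ j' then (1:ℝ) else 0) = _
      by_cases h : j' = j
      · simp [h]
      · have h2 : j ≠ j' := fun hh => h hh.symm
        simp [h, h2]
    rw [Finset.sum_congr rfl fun j' _ => this j', Finset.sum_sub_distrib]
    simp [Finset.sum_ite_eq']
  rw [h1, h2]

end DegAux

section LapAux

lemma normLap_apply {V : Type*} [Fintype V] [DecidableEq V] (A : Matrix V V ℝ) (u w : V) :
    normLap A u w = (if u = w then 1 else 0)
      - (1 / Real.sqrt (wdeg A u)) * A u w * (1 / Real.sqrt (wdeg A w)) := by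
  rw [normLap, Matrix.sub_apply, Matrix.one_apply, Matrix.mul_diagonal, Matrix.diagonal_mul]

lemma normLap_symm {V : Type*} [Fintype V] [DecidableEq V] (A : Matrix V V ℝ)
    (hA : ∀ u w, A u w = A w u) : ∀ u w, normLap A u w = normLap A w u := by
  intro u w
  rw [normLap_apply, normLap_apply, hA u w]
  by_cases h : u = w
  · subst h; ring
  · have h2 : ¬ w = u := fun hh => h hh.symm
    rw [if_neg h, if_neg h2]; ring

lemma normLap_sqrtdeg {V : Type*} [Fintype V] [DecidableEq V] (A : Matrix V V ℝ)
    (hd : ∀ u, 0 < wdeg A u) :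
    normLap A *ᵥ (fun u => Real.sqrt (wdeg A u)) = 0 := by
  funext u
  rw [Matrix.mulVec]
  simp only [dotProduct, normLap_apply]
  have hstep : ∀ w, ((if u = w then (1:ℝ) else 0)
      - (1 / Real.sqrt (wdeg A u)) * A u w * (1 / Real.sqrt (wdeg A w))) * Real.sqrt (wdeg A w)
      = (if w = u then Real.sqrt (wdeg A w) else 0) - (1 / Real.sqrt (wdeg A u)) * A u w := by
    intro w
    have hsw : Real.sqrt (wdeg A w) ≠ 0 := ne_of_gt (Real.sqrt_pos.mpr (hd w))
    have hsu : Real.sqrt (wdeg A u) ≠ 0 := ne_of_gt (Real.sqrt_pos.mpr (hd u))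
    by_cases h : u = w
    · subst h; rw [if_pos rfl, if_pos rfl]; field_simp
    · have h2 : ¬ w = u := fun hh => h hh.symm
      rw [if_neg h, if_neg h2]; field_simp; ring
  rw [Finset.sum_congr rfl fun w _ => hstep w, Finset.sum_sub_distrib]
  rw [Finset.sum_ite_eq' Finset.univ u (fun w => Real.sqrt (wdeg A w))]
  simp only [Finset.mem_univ, if_pos]
  have : ∑ w, (1 / Real.sqrt (wdeg A u)) * A u w = (1 / Real.sqrt (wdeg A u)) * wdeg A u := by
    rw [← Finset.mul_sum]; rfl
  rw [this]
  have hsu : Real.sqrt (wdeg A u) * Real.sqrt (wdeg A u) = wdeg A u :=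
    Real.mul_self_sqrt (le_of_lt (hd u))
  have hne : Real.sqrt (wdeg A u) ≠ 0 := ne_of_gt (Real.sqrt_pos.mpr (hd u))
  rw [Pi.zero_apply]
  field_simp
  rw [sq, hsu]; ring

lemma rayleigh_expand {V : Type*} [Fintype V] [DecidableEq V] (A : Matrix V V ℝ) (x : V → ℝ) :
    x ⬝ᵥ (normLap A *ᵥ x) = x ⬝ᵥ x
      - ∑ u, ∑ w, (x u * (1 / Real.sqrt (wdeg A u))) * A u w
          * ((1 / Real.sqrt (wdeg A w)) * x w) := by
  simp only [Matrix.mulVec, dotProduct, normLap_apply]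
  rw [← Finset.sum_sub_distrib]
  refine Finset.sum_congr rfl fun u _ => ?_
  rw [Finset.mul_sum]
  have hstep : ∀ w, x u * (((if u = w then (1:ℝ) else 0)
      - (1 / Real.sqrt (wdeg A u)) * A u w * (1 / Real.sqrt (wdeg A w))) * x w)
      = (if w = u then x u * x u else 0)
        - (x u * (1 / Real.sqrt (wdeg A u))) * A u w * ((1 / Real.sqrt (wdeg A w)) * x w) := by
    intro w
    by_cases h : u = w
    · subst h; rw [if_pos rfl, if_pos rfl]; ring
    · have h2 : ¬ w = u := fun hh => h hh.symm
      rw [if_neg h, if_neg h2]; ring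
  rw [Finset.sum_congr rfl fun w _ => hstep w, Finset.sum_sub_distrib,
    Finset.sum_ite_eq' Finset.univ u (fun _ => x u * x u)]
  simp

end LapAux

lemma spectral {N : Type*} [Fintype N] [DecidableEq N] {m : ℕ} (hm : 1 < m)
    (e : Fin m ≃ N)
    (L : Matrix N N ℝ) (μ : Fin m → ℝ) (v : Fin m → N → ℝ)
    (hmono : Monotone μ)
    (horth : ∀ i j, v i ⬝ᵥ v j = if i = j then (1:ℝ) else 0)
    (heig : ∀ i, L *ᵥ v i = μ i • v i)
    (z : N → ℝ) (hz0 : z ⬝ᵥ v ⟨0, by omega⟩ = 0)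
    (hzz : 0 < z ⬝ᵥ z)
    (c : ℝ) (hc : z ⬝ᵥ (L *ᵥ z) ≤ c * (z ⬝ᵥ z)) :
    μ ⟨1, by omega⟩ ≤ c := by
  classical
  set Vm : Matrix (Fin m) N ℝ := Matrix.of v with hVm
  have hVV : Vm * Vmᵀ = 1 := by
    ext i j
    rw [Matrix.mul_apply, Matrix.one_apply]
    simpa [Vm, dotProduct] using horth i j
  have hVtV : Vmᵀ * Vm = 1 := (Matrix.mul_eq_one_comm_of_equiv e).mp hVV
  set cf : Fin m → ℝ := fun i => v i ⬝ᵥ z with hcf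
  have hzdecomp : ∀ u, z u = ∑ i, cf i * v i u := by
    intro u
    have h : Vmᵀ *ᵥ (Vm *ᵥ z) = z := by
      rw [Matrix.mulVec_mulVec, hVtV, Matrix.one_mulVec]
    have h2 := congrFun h u
    rw [Matrix.mulVec] at h2
    simp only [dotProduct, Matrix.transpose_apply] at h2
    rw [← h2]
    refine Finset.sum_congr rfl fun i _ => ?_
    simp [Vm, Matrix.mulVec, dotProduct, cf, mul_comm]
  have hdotv : ∀ i, z ⬝ᵥ v i = cf i := fun i => by
    rw [hcf]; exact dotProduct_comm z (v i)
  have hzz' : z ⬝ᵥ z = ∑ i, cf i ^ 2 := by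
    calc z ⬝ᵥ z = ∑ u, z u * z u := rfl
    _ = ∑ u, ∑ i, cf i * (z u * v i u) := by
        refine Finset.sum_congr rfl fun u _ => ?_
        nth_rewrite 2 [hzdecomp u]
        rw [Finset.mul_sum]
        exact Finset.sum_congr rfl fun i _ => by ring
    _ = ∑ i, cf i * ∑ u, z u * v i u := by
        rw [Finset.sum_comm]
        exact Finset.sum_congr rfl fun i _ => by rw [Finset.mul_sum]
    _ = ∑ i, cf i ^ 2 := by
        refine Finset.sum_congr rfl fun i _ => ?_
        have : ∑ u, z u * v i u = z ⬝ᵥ v i := rfl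
        rw [this, hdotv]; ring
  have hzfun : z = ∑ i, cf i • v i := by
    funext u
    rw [hzdecomp u]
    simp [Finset.sum_apply]
  have hLz : L *ᵥ z = ∑ i, (cf i * μ i) • v i := by
    have : L *ᵥ z = ∑ i, cf i • (L *ᵥ v i) := by
      rw [hzfun, ← Matrix.mulVecLin_apply, map_sum]
      refine Finset.sum_congr rfl fun i _ => ?_
      rw [_root_.map_smul, Matrix.mulVecLin_apply]
    rw [this]
    refine Finset.sum_congr rfl fun i _ => ?_
    rw [heig i, smul_smul]
  have hzLz : z ⬝ᵥ (L *ᵥ z) = ∑ i, μ i * cf i ^ 2 := by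
    rw [hLz]
    calc z ⬝ᵥ (∑ i, (cf i * μ i) • v i) = ∑ u, z u * ∑ i, (cf i * μ i) * v i u := by
          refine Finset.sum_congr rfl fun u _ => ?_
          simp [Finset.sum_apply]
    _ = ∑ u, ∑ i, (cf i * μ i) * (z u * v i u) := by
        refine Finset.sum_congr rfl fun u _ => ?_
        rw [Finset.mul_sum]
        exact Finset.sum_congr rfl fun i _ => by ring
    _ = ∑ i, (cf i * μ i) * ∑ u, z u * v i u := by
        rw [Finset.sum_comm]
        exact Finset.sum_congr rfl fun i _ => by rw [Finset.mul_sum]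
    _ = ∑ i, μ i * cf i ^ 2 := by
        refine Finset.sum_congr rfl fun i _ => ?_
        have : ∑ u, z u * v i u = z ⬝ᵥ v i := rfl
        rw [this, hdotv]; ring
  have hc0 : cf ⟨0, by omega⟩ = 0 := by rw [← hdotv]; exact hz0
  have hmain : μ ⟨1, by omega⟩ * (z ⬝ᵥ z) ≤ ∑ i, μ i * cf i ^ 2 := by
    rw [hzz', Finset.mul_sum]
    refine Finset.sum_le_sum fun i _ => ?_
    by_cases hi : i = ⟨0, by omega⟩
    · rw [hi, hc0]; ring_nf; exact le_refl _
    · have h1 : (⟨1, by omega⟩ : Fin m) ≤ i := by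
        have hv1 : ((⟨1, by omega⟩ : Fin m)).val = 1 := rfl
        have hne : i.val ≠ 0 := fun h => hi (Fin.ext h)
        rw [Fin.le_def, hv1]
        omega
      exact mul_le_mul_of_nonneg_right (hmono h1) (sq_nonneg _)
  have := le_trans hmain (le_of_eq hzLz.symm)
  have h2 : μ ⟨1, by omega⟩ * (z ⬝ᵥ z) ≤ c * (z ⬝ᵥ z) := le_trans this hc
  exact le_of_mul_le_mul_right h2 hzz

/-- The second-smallest normalized-Laplacian eigenvalue of `G_{k,l}` is at most
`1 - cos(2π/k)`. -/
theorem stmt14 (k l : ℕ) (hk : 3 ≤ k) (hl : 1 ≤ l)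
    (μ : Fin (k + l) → ℝ) (v : Fin (k + l) → (Fin k ⊕ Fin l) → ℝ)
    (hmono : Monotone μ)
    (horth : ∀ i j, v i ⬝ᵥ v j = if i = j then (1 : ℝ) else 0)
    (heig : ∀ i, normLap (cycleCliqueAdj k l hk hl) *ᵥ v i = μ i • v i) :
    μ ⟨1, by omega⟩ ≤ 1 - Real.cos (2 * Real.pi / k) := by
  classical
  haveI : NeZero k := ⟨by omega⟩
  haveI : NeZero l := ⟨by omega⟩
  set A := cycleCliqueAdj k l hk hl with hA
  set L := normLap A with hL
  -- degrees are positive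
  have hd : ∀ u, 0 < wdeg A u := by
    rintro (i | j)
    · rw [hA, wdeg_inl k l hk hl i]
      by_cases h : i = ⟨0, by omega⟩ <;> simp [h] <;> positivity
    · rw [hA, wdeg_inr k l hk hl j]
      by_cases h : j = ⟨0, by omega⟩
      · have : (1:ℝ) ≤ (l:ℝ) := by exact_mod_cast hl
        simp [h]; linarith
      · have h2 : 1 ≤ (j:ℕ) := by
          have : (j:ℕ) ≠ 0 := fun hh => h (Fin.ext hh)
          omega
        have h3 : 2 ≤ l := by have := j.2; omega
        have : (2:ℝ) ≤ (l:ℝ) := by exact_mod_cast h3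
        simp [h]; by_cases hj : j = 0 <;> simp [hj] <;> linarith
  -- the test vector
  set x : (Fin k ⊕ Fin l) → ℝ :=
    Sum.elim (fun i : Fin k => Real.sin (2*π*(i:ℕ)/k)) (fun _ => 0) with hx
  set w : (Fin k ⊕ Fin l) → ℝ := fun u => Real.sqrt (wdeg A u) with hw
  have hx0 : x (Sum.inl ⟨0, by omega⟩) = 0 := by
    simp [hx]
  -- key scaling identity
  have hxf : ∀ u, x u * (1 / Real.sqrt (wdeg A u)) = x u * (1 / Real.sqrt 2) := by
    rintro (i | j)
    · by_cases hi : i = ⟨0, by omega⟩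
      · rw [hi, hx0]; ring
      · rw [hA, wdeg_inl k l hk hl i, if_neg hi]; norm_num
    · simp [hx]
  -- Rayleigh quotient of x
  have hS : ∑ u, ∑ u', (x u * (1 / Real.sqrt (wdeg A u))) * A u u'
      * ((1 / Real.sqrt (wdeg A u')) * x u')
      = Real.cos (2*π/k) * ∑ i : Fin k, Real.sin (2*π*(i:ℕ)/k) ^ 2 := by
    have hstep : ∀ u u', (x u * (1 / Real.sqrt (wdeg A u))) * A u u'
        * ((1 / Real.sqrt (wdeg A u')) * x u')
        = (1/2) * (x u * A u u' * x u') := by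
      intro u u'
      rw [hxf u]
      have h2 : (1 / Real.sqrt (wdeg A u')) * x u' = (1 / Real.sqrt 2) * x u' := by
        rw [mul_comm, hxf u', mul_comm]
      rw [h2]
      have hs2 : Real.sqrt 2 * Real.sqrt 2 = 2 := Real.mul_self_sqrt (by norm_num)
      have hs2ne : Real.sqrt 2 ≠ 0 := by positivity
      field_simp
      rw [Real.sq_sqrt (by norm_num)]; ring
    rw [Finset.sum_congr rfl fun u _ => Finset.sum_congr rfl fun u' _ => hstep u u']
    rw [show (∑ u : Fin k ⊕ Fin l, ∑ u' : Fin k ⊕ Fin l, (1:ℝ)/2 * (x u * A u u' * x u'))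
        = 1/2 * ∑ u : Fin k ⊕ Fin l, ∑ u' : Fin k ⊕ Fin l, x u * A u u' * x u' from by
      rw [Finset.mul_sum]
      exact Finset.sum_congr rfl fun u _ => (Finset.mul_sum _ _ _).symm]
    -- reduce the double sum over the sum type to the cycle block
    have hT : ∑ u, ∑ u', x u * A u u' * x u'
        = ∑ i : Fin k, ∑ j : Fin k, x (Sum.inl i) * A (Sum.inl i) (Sum.inl j) * x (Sum.inl j) := by
      rw [Fintype.sum_sum_type]
      have h1 : ∀ j : Fin l, ∑ u', x (Sum.inr j) * A (Sum.inr j) u' * x u' = 0 := by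
        intro j; simp [hx]
      rw [Finset.sum_congr rfl fun j _ => h1 j]
      simp only [Finset.sum_const_zero, add_zero]
      refine Finset.sum_congr rfl fun i _ => ?_
      rw [Fintype.sum_sum_type]
      have h2 : ∀ j : Fin l, x (Sum.inl i) * A (Sum.inl i) (Sum.inr j) * x (Sum.inr j) = 0 := by
        intro j; simp [hx]
      rw [Finset.sum_congr rfl fun j _ => h2 j]
      simp
    rw [hT]
    -- now compute the cycle double sum
    have hcyc : ∀ i : Fin k, ∑ j : Fin k, x (Sum.inl i) * A (Sum.inl i) (Sum.inl j) * x (Sum.inl j)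
        = 2 * Real.cos (2*π/k) * Real.sin (2*π*(i:ℕ)/k) ^ 2 := by
      intro i
      have hcond : ∀ j : Fin k, A (Sum.inl i) (Sum.inl j)
          = (if j = i + ⟨1, by omega⟩ then (1:ℝ) else 0)
            + (if j = i - ⟨1, by omega⟩ then (1:ℝ) else 0) := by
        intro j
        show (if (j = i + ⟨1, by omega⟩ ∨ i = j + ⟨1, by omega⟩) then (1:ℝ) else 0) = _
        have hiff : (j = i + ⟨1, by omega⟩ ∨ i = j + ⟨1, by omega⟩)
            ↔ (j = i + ⟨1, by omega⟩ ∨ j = i - ⟨1, by omega⟩) := by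
          apply or_congr Iff.rfl
          constructor
          · intro h; rw [h, add_sub_cancel_right]
          · intro h; rw [h, sub_add_cancel]
        rw [if_congr hiff rfl rfl]
        have hab := two_ne hk i
        by_cases h1 : j = i + ⟨1, by omega⟩
        · have h2 : ¬ j = i - ⟨1, by omega⟩ := by rw [h1]; exact hab
          simp [h1, h2, hab]
        · by_cases h3 : j = i - ⟨1, by omega⟩
          · simp [h1, h3, Ne.symm hab]
          · simp [h1, h3]
      have hsum : ∑ j : Fin k, x (Sum.inl i) * A (Sum.inl i) (Sum.inl j) * x (Sum.inl j)
          = x (Sum.inl i) * (x (Sum.inl (i + ⟨1, by omega⟩)) + x (Sum.inl (i - ⟨1, by omega⟩))) := by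
        rw [Finset.sum_congr rfl fun j _ => by rw [hcond j]]
        have hsplit : ∀ j : Fin k, x (Sum.inl i) * ((if j = i + ⟨1, by omega⟩ then (1:ℝ) else 0)
            + (if j = i - ⟨1, by omega⟩ then (1:ℝ) else 0)) * x (Sum.inl j)
            = (if j = i + ⟨1, by omega⟩ then x (Sum.inl i) * x (Sum.inl j) else 0)
              + (if j = i - ⟨1, by omega⟩ then x (Sum.inl i) * x (Sum.inl j) else 0) := by
          intro j
          have hab := two_ne hk i
          by_cases h1 : j = i + ⟨1, by omega⟩
          · subst h1
            have h2 := hab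
            rw [if_pos rfl, if_pos rfl, if_neg h2, if_neg h2]
            ring
          · by_cases h2 : j = i - ⟨1, by omega⟩
            · subst h2
              rw [if_neg (Ne.symm hab), if_neg (Ne.symm hab), if_pos rfl, if_pos rfl]
              ring
            · simp only [if_neg h1, if_neg h2]
              ring
        rw [Finset.sum_congr rfl fun j _ => hsplit j, Finset.sum_add_distrib,
          Finset.sum_ite_eq' Finset.univ (i + ⟨1, by omega⟩)
            (fun j => x (Sum.inl i) * x (Sum.inl j)),
          Finset.sum_ite_eq' Finset.univ (i - ⟨1, by omega⟩)
            (fun j => x (Sum.inl i) * x (Sum.inl j))]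
        simp
        ring
      rw [hsum]
      have hrec := recur k hk i
      have hxv : ∀ i' : Fin k, x (Sum.inl i') = Real.sin (2*π*(i':ℕ)/k) := fun i' => rfl
      rw [hxv, hxv, hxv, hrec]
      ring
    rw [Finset.sum_congr rfl fun i _ => hcyc i]
    rw [← Finset.mul_sum]
    ring
  have hxx : x ⬝ᵥ x = ∑ i : Fin k, Real.sin (2*π*(i:ℕ)/k) ^ 2 := by
    rw [dotProduct, Fintype.sum_sum_type]
    simp [hx, sq]
  have hxxpos : 0 < x ⬝ᵥ x := by
    rw [hxx]
    have hπ := Real.pi_pos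
    have hk3 : (3:ℝ) ≤ (k:ℝ) := by exact_mod_cast hk
    have hsin1 : 0 < Real.sin (2*π*((⟨1, by omega⟩ : Fin k):ℕ)/k) := by
      have hval : ((⟨1, by omega⟩ : Fin k):ℕ) = 1 := rfl
      rw [hval, Nat.cast_one]
      apply Real.sin_pos_of_pos_of_lt_pi
      · positivity
      · rw [div_lt_iff₀ (by linarith)]
        nlinarith
    apply Finset.sum_pos'
    · intro i _; exact sq_nonneg _
    · exact ⟨⟨1, by omega⟩, Finset.mem_univ _, by positivity⟩
  have hRay : x ⬝ᵥ (L *ᵥ x) = (1 - Real.cos (2*π/k)) * (x ⬝ᵥ x) := by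
    rw [hL, rayleigh_expand, hS, hxx]
    ring
  -- x is orthogonal to w
  have hxw : x ⬝ᵥ w = 0 := by
    rw [dotProduct, Fintype.sum_sum_type]
    have h2 : ∀ j : Fin l, x (Sum.inr j) * w (Sum.inr j) = 0 := by intro j; simp [hx]
    rw [Finset.sum_congr rfl fun j _ => h2 j]
    simp only [Finset.sum_const_zero, add_zero]
    have h1 : ∀ i : Fin k, x (Sum.inl i) * w (Sum.inl i)
        = Real.sqrt 2 * Real.sin (2*π*(i:ℕ)/k) := by
      intro i
      by_cases hi : i = ⟨0, by omega⟩
      · rw [hi, hx0]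
        have : Real.sin (2*π*(((⟨0, by omega⟩ : Fin k)):ℕ)/k) = 0 := by
          norm_num
        rw [this]; ring
      · have : w (Sum.inl i) = Real.sqrt 2 := by
          show Real.sqrt (wdeg A (Sum.inl i)) = Real.sqrt 2
          rw [hA, wdeg_inl k l hk hl i, if_neg hi]; norm_num
        rw [this]
        have hxv : x (Sum.inl i) = Real.sin (2*π*(i:ℕ)/k) := rfl
        rw [hxv]; ring
    rw [Finset.sum_congr rfl fun i _ => h1 i, ← Finset.mul_sum,
      sinsum k (by omega)]
    ring
  have hww : 0 < w ⬝ᵥ w := by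
    rw [dotProduct]
    apply Finset.sum_pos
    · intro u _
      have := hd u
      have : w u * w u = wdeg A u := Real.mul_self_sqrt (le_of_lt (hd u))
      rw [this]; exact hd u
    · exact ⟨Sum.inl ⟨0, by omega⟩, Finset.mem_univ _⟩
  have hLw : L *ᵥ w = 0 := normLap_sqrtdeg A hd
  -- symmetry of L
  have hAsym : ∀ u u', A u u' = A u' u := by
    rintro (i | j) (i' | j')
    · show (if (i' = i + ⟨1, by omega⟩ ∨ i = i' + ⟨1, by omega⟩) then (1:ℝ) else 0) = _
      rw [if_congr (or_comm) rfl rfl]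
      rfl
    · rfl
    · rfl
    · show (if j ≠ j' then (1:ℝ) else 0) = (if j' ≠ j then (1:ℝ) else 0)
      rw [if_congr (ne_comm) rfl rfl]
  have hLsym : Lᵀ = L := by
    ext u u'
    rw [Matrix.transpose_apply]
    exact (normLap_symm A hAsym u' u)
  have hwLx : w ⬝ᵥ (L *ᵥ x) = 0 := by
    rw [Matrix.dotProduct_mulVec, ← Matrix.mulVec_transpose, hLsym, hLw]
    simp [dotProduct]
  have hcos : Real.cos (2*π/k) ≤ 1 := Real.cos_le_one _
  have hm : 1 < k + l := by omega
  set e : Fin (k + l) ≃ (Fin k ⊕ Fin l) := finSumFinEquiv.symm with he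
  by_cases hα : x ⬝ᵥ v ⟨0, by omega⟩ = 0
  · exact spectral hm e L μ v hmono horth heig x hα hxxpos _
      (le_of_eq (by rw [hRay]))
  · set α : ℝ := x ⬝ᵥ v ⟨0, by omega⟩ with hαdef
    set β : ℝ := w ⬝ᵥ v ⟨0, by omega⟩ with hβdef
    set z : (Fin k ⊕ Fin l) → ℝ := β • x - α • w with hz
    have hz0 : z ⬝ᵥ v ⟨0, by omega⟩ = 0 := by
      rw [hz, sub_dotProduct, smul_dotProduct, smul_dotProduct]
      simp only [smul_eq_mul, ← hαdef, ← hβdef]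
      ring
    have hzx : z ⬝ᵥ z = β^2 * (x ⬝ᵥ x) + α^2 * (w ⬝ᵥ w) := by
      rw [hz]
      rw [sub_dotProduct, smul_dotProduct, smul_dotProduct,
        dotProduct_sub, dotProduct_sub, dotProduct_smul,
        dotProduct_smul, dotProduct_smul, dotProduct_smul]
      have hwx : w ⬝ᵥ x = 0 := by rw [dotProduct_comm]; exact hxw
      simp only [smul_eq_mul, hxw, hwx]
      ring
    have hzzpos : 0 < z ⬝ᵥ z := by
      rw [hzx]
      have hα2 : 0 < α ^ 2 := by
        have hne : α ^ 2 ≠ 0 := pow_ne_zero 2 hα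
        exact (sq_nonneg α).lt_of_ne (Ne.symm hne)
      nlinarith [sq_nonneg β, hxxpos, hww]
    have hLz : L *ᵥ z = β • (L *ᵥ x) := by
      rw [hz, Matrix.mulVec_sub, Matrix.mulVec_smul, Matrix.mulVec_smul, hLw]
      simp
    have hzLz : z ⬝ᵥ (L *ᵥ z) = β^2 * (x ⬝ᵥ (L *ᵥ x)) := by
      rw [hLz, hz, sub_dotProduct, smul_dotProduct, smul_dotProduct,
        dotProduct_smul, dotProduct_smul]
      simp only [smul_eq_mul, hwLx]
      ring
    have hc : z ⬝ᵥ (L *ᵥ z) ≤ (1 - Real.cos (2*π/k)) * (z ⬝ᵥ z) := by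
      rw [hzLz, hRay, hzx]
      have h1 : 0 ≤ 1 - Real.cos (2*π/k) := by linarith
      have h2 : 0 ≤ α^2 * (w ⬝ᵥ w) := by positivity
      nlinarith [sq_nonneg β]
    exact spectral hm e L μ v hmono horth heig z hz0 hzzpos _ hc
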